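/- For partitions λ and μ with |λ| ≤ |μ|, H_{λ,μ} := ⟨h_{|μ|-|λ|} h_λ, p_μ⟩ = Σ over all sequences of partitions (γ^{(1)},...,γ^{(ℓ(λ))}) with γ^{(i)} ⊢ λ_i, of Π_{i=1}^{μ_1} multinomial( m_i(μ) ; m_i(γ^{(1)}), ..., m_i(γ^{(ℓ(λ))}) ), with the convention that the product is 0 unless the union of parts of the γ^{(j)} is a sub-multiset of the parts of μ. -/

import Mathlib

open scoped BigOperators

/-- The ring of symmetric functions, modeled as polynomials in the
(algebraically independent) power sums `p_1, p_2, …`:  variable `k : ℕ+` stands for `p_k`. -/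
abbrev SymF := MvPolynomial ℕ+ ℂ

/-- `z_γ = ∏ i^{m_i(γ)} m_i(γ)!`. -/
noncomputable def zPart (γ : Multiset ℕ) : ℂ :=
  ∏ i ∈ γ.toFinset, ((i : ℂ) ^ γ.count i * Nat.factorial (γ.count i))

/-- The power sum `p_γ` of a partition `γ` (with positive parts). -/
noncomputable def pMon (γ : Multiset ℕ) : SymF :=
  (γ.map fun i => if h : 0 < i then MvPolynomial.X (⟨i, h⟩ : ℕ+) else 1).prod

/-- The complete homogeneous symmetric function `h_r = ∑_{γ ⊢ r} p_γ / z_γ`. -/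
noncomputable def hPoly (r : ℕ) : SymF :=
  ∑ γ : Nat.Partition r, (zPart γ.parts)⁻¹ • pMon γ.parts

/-- `h_γ = ∏ h_{γ_i}` for a multiset of parts. -/
noncomputable def hProdM (γ : Multiset ℕ) : SymF := (γ.map hPoly).prod

/-- `z` of an exponent vector of power sums. -/
noncomputable def zOf (m : ℕ+ →₀ ℕ) : ℂ :=
  ∏ k ∈ m.support, (((k : ℕ) : ℂ) ^ m k * Nat.factorial (m k))

/-- The Hall inner product, determined by `⟨p_λ, p_μ⟩ = δ_{λμ} z_λ`. -/
noncomputable def hall (f g : SymF) : ℂ :=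
  ∑ m ∈ f.support, f.coeff m * g.coeff m * zOf m

/-- A multinomial coefficient `m! / (a_1! ⋯ a_t! (m - ∑ a_j)!)`, zero when `∑ a_j > m`. -/
def multin (m : ℕ) {t : ℕ} (a : Fin t → ℕ) : ℕ :=
  if (∑ j, a j) ≤ m then m.factorial / ((∏ j, (a j).factorial) * (m - ∑ j, a j).factorial)
  else 0


/-! ### auxiliary -/

noncomputable def mVec (γ : Multiset ℕ) : ℕ+ →₀ ℕ :=
  Finsupp.comapDomain (fun k : ℕ+ => (k : ℕ)) γ.toFinsupp
    (fun _ _ _ _ h => PNat.coe_injective h)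

lemma mVec_apply (γ : Multiset ℕ) (k : ℕ+) : mVec γ k = γ.count (k : ℕ) := by
  exact Multiset.toFinsupp_apply γ (k : ℕ)

lemma mVec_zero : mVec 0 = 0 := by
  ext k; simp [mVec_apply]

lemma mVec_cons {i : ℕ} (h : 0 < i) (γ : Multiset ℕ) :
    mVec (i ::ₘ γ) = mVec γ + (Finsupp.single (⟨i, h⟩ : ℕ+) 1 : ℕ+ →₀ ℕ) := by
  ext k
  simp only [mVec_apply, Finsupp.add_apply, Finsupp.single_apply, Multiset.count_cons]
  rcases eq_or_ne ((k : ℕ)) i with hk | hk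
  · rw [if_pos hk]
    classical
    exact congrArg _ (Finsupp.single_apply.trans
      (if_pos (PNat.eq (m := (⟨i, h⟩ : ℕ+)) (n := k) hk.symm))).symm
  · rw [if_neg hk]
    classical
    exact congrArg _ (Finsupp.single_apply.trans
      (if_neg (fun e : (⟨i, h⟩ : ℕ+) = k => hk (congrArg PNat.val e).symm))).symm

lemma pMon_eq_monomial (γ : Multiset ℕ) (hγ : ∀ i ∈ γ, 0 < i) :
    pMon γ = MvPolynomial.monomial (mVec γ) 1 := by
  induction γ using Multiset.induction_on with
  | empty => simp [pMon, mVec_zero]; rfl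
  | cons i γ ih =>
    have hi : 0 < i := hγ i (Multiset.mem_cons_self i γ)
    have : pMon (i ::ₘ γ) = (MvPolynomial.X (⟨i, hi⟩ : ℕ+) : SymF) * pMon γ := by
      simp only [pMon, Multiset.map_cons, Multiset.prod_cons, dif_pos hi]; rfl
    rw [this, ih (fun j hj => hγ j (Multiset.mem_cons_of_mem hj)), mVec_cons hi γ]
    refine (MvPolynomial.monomial_add_single.trans ?_).symm; rw [pow_one]
    exact mul_comm _ _

lemma mVec_inj {γ μ : Multiset ℕ} (hγ : ∀ i ∈ γ, 0 < i) (hμ : ∀ i ∈ μ, 0 < i)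
    (h : mVec γ = mVec μ) : γ = μ := by
  ext i
  rcases Nat.eq_zero_or_pos i with rfl | hi
  · rw [Multiset.count_eq_zero_of_notMem (fun hm => absurd (hγ 0 hm) (lt_irrefl 0)),
      Multiset.count_eq_zero_of_notMem (fun hm => absurd (hμ 0 hm) (lt_irrefl 0))]
  · have := DFunLike.congr_fun h (⟨i, hi⟩ : ℕ+)
    exact (mVec_apply γ _).symm.trans (this.trans (mVec_apply μ _))

lemma zPart_eq_prod (γ : Multiset ℕ) {T : Finset ℕ} (hT : γ.toFinset ⊆ T) :
    zPart γ = ∏ i ∈ T, ((i : ℂ) ^ γ.count i * Nat.factorial (γ.count i)) := by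
  refine Finset.prod_subset hT ?_
  intro i _ hi
  have : γ.count i = 0 := by
    rw [Multiset.count_eq_zero]
    exact fun hm => hi (Multiset.mem_toFinset.mpr hm)
  simp [this]

lemma zOf_mVec (γ : Multiset ℕ) (hγ : ∀ i ∈ γ, 0 < i) : zOf (mVec γ) = zPart γ := by
  rw [zOf, zPart]
  refine Finset.prod_bij (fun k _ => (k : ℕ)) ?_ ?_ ?_ ?_
  · intro k hk
    rw [Finsupp.mem_support_iff, mVec_apply] at hk
    exact Multiset.mem_toFinset.mpr (Multiset.count_pos.mp (Nat.pos_of_ne_zero hk))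
  · intro a _ b _ h; exact PNat.coe_injective h
  · intro i hi
    have him : i ∈ γ := Multiset.mem_toFinset.mp hi
    refine ⟨⟨i, hγ i him⟩, ?_, rfl⟩
    exact Finsupp.mem_support_iff.mpr ((mVec_apply γ _).trans_ne (Multiset.count_pos.mpr him).ne')
  · intro k hk
    rw [mVec_apply]

lemma multin_mul_eq (m : ℕ) {t : ℕ} (a : Fin t → ℕ) (h : (∑ j, a j) ≤ m) :
    multin m a * ((∏ j, (a j).factorial) * (m - ∑ j, a j).factorial) = m.factorial := by
  set g : Fin (t + 1) → ℕ := Fin.cons (m - ∑ j, a j) a with hg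
  have hs : (∑ j, g j) = m := by
    rw [Fin.sum_univ_succ]; simp only [hg, Fin.cons_zero, Fin.cons_succ]; omega
  have hp : (∏ j, Nat.factorial (g j))
      = (m - ∑ j, a j).factorial * ∏ j, (a j).factorial := by
    rw [Fin.prod_univ_succ]; simp only [hg, Fin.cons_zero, Fin.cons_succ]
  have hmn : multin m a = Nat.multinomial Finset.univ g := by
    rw [multin, if_pos h, Nat.multinomial, hs, hp, mul_comm ((m - ∑ j, a j).factorial)]
  have := Nat.multinomial_spec (Finset.univ : Finset (Fin (t + 1))) g
  rw [hs, hp] at this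
  rw [hmn]
  linarith [this]

lemma pointwise (i : ℕ) (hi : 1 ≤ i) {t : ℕ} (cm : ℕ) (c : Fin t → ℕ)
    (hle : ∑ j, c j ≤ cm) :
    (i : ℂ) ^ cm * (Nat.factorial cm) *
      (((i : ℂ) ^ (cm - ∑ j, c j) * Nat.factorial (cm - ∑ j, c j))⁻¹ *
        ∏ j, ((i : ℂ) ^ (c j) * Nat.factorial (c j))⁻¹)
    = (multin cm c : ℂ) := by
  have hi0 : (i : ℂ) ≠ 0 := Nat.cast_ne_zero.mpr (by omega)
  have hf0 : ∀ n : ℕ, ((Nat.factorial n : ℂ)) ≠ 0 :=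
    fun n => Nat.cast_ne_zero.mpr (Nat.factorial_ne_zero n)
  have key : (multin cm c : ℂ) * ((∏ j, (Nat.factorial (c j) : ℂ)) *
      (Nat.factorial (cm - ∑ j, c j) : ℂ)) = (Nat.factorial cm : ℂ) := by
    exact_mod_cast congrArg (fun n : ℕ => (n : ℂ)) (multin_mul_eq cm c hle)
  have hP : ∏ j, ((i : ℂ) ^ (c j) * Nat.factorial (c j))⁻¹
      = ((i : ℂ) ^ (∑ j, c j))⁻¹ * (∏ j, (Nat.factorial (c j) : ℂ))⁻¹ := by
    rw [Finset.prod_inv_distrib, Finset.prod_mul_distrib, Finset.prod_pow_eq_pow_sum, mul_inv]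
  have hpow : (i : ℂ) ^ cm = (i : ℂ) ^ (cm - ∑ j, c j) * (i : ℂ) ^ (∑ j, c j) := by
    rw [← pow_add]; congr 1; omega
  have h1 : ((i : ℂ) ^ (cm - ∑ j, c j)) ≠ 0 := pow_ne_zero _ hi0
  have h2 : ((i : ℂ) ^ (∑ j, c j)) ≠ 0 := pow_ne_zero _ hi0
  have h3 : (∏ j, (Nat.factorial (c j) : ℂ)) ≠ 0 :=
    Finset.prod_ne_zero_iff.mpr fun j _ => hf0 _
  have hmn : (multin cm c : ℂ) = (Nat.factorial cm : ℂ) /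
      ((∏ j, (Nat.factorial (c j) : ℂ)) * (Nat.factorial (cm - ∑ j, c j) : ℂ)) := by
    rw [eq_div_iff (mul_ne_zero h3 (hf0 _))]; exact key
  rw [hP, hpow, hmn, mul_inv]
  rw [div_eq_mul_inv, mul_inv]
  have e1 := mul_inv_cancel₀ h1
  have e2 := mul_inv_cancel₀ h2
  calc ((i:ℂ) ^ (cm - ∑ j, c j) * (i:ℂ) ^ (∑ j, c j)) * (Nat.factorial cm : ℂ) *
        ((((i:ℂ) ^ (cm - ∑ j, c j))⁻¹ * ((Nat.factorial (cm - ∑ j, c j) : ℂ))⁻¹) *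
          ((((i:ℂ) ^ (∑ j, c j))⁻¹) * (∏ j, (Nat.factorial (c j) : ℂ))⁻¹))
      = ((i:ℂ) ^ (cm - ∑ j, c j) * ((i:ℂ) ^ (cm - ∑ j, c j))⁻¹) *
        ((i:ℂ) ^ (∑ j, c j) * ((i:ℂ) ^ (∑ j, c j))⁻¹) *
        ((Nat.factorial cm : ℂ) * ((∏ j, (Nat.factorial (c j) : ℂ))⁻¹ *
          ((Nat.factorial (cm - ∑ j, c j) : ℂ))⁻¹)) := by ring
    _ = (Nat.factorial cm : ℂ) * ((∏ j, (Nat.factorial (c j) : ℂ))⁻¹ *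
          ((Nat.factorial (cm - ∑ j, c j) : ℂ))⁻¹) := by rw [e1, e2, one_mul, one_mul]
    _ = (Nat.factorial cm : ℂ) * (((∏ j, (Nat.factorial (c j) : ℂ)))⁻¹ *
          ((Nat.factorial (cm - ∑ j, c j) : ℂ))⁻¹) := rfl

lemma pMon_zero : pMon 0 = 1 := by simp [pMon]; rfl

lemma pMon_add (a b : Multiset ℕ) : pMon (a + b) = pMon a * pMon b := by
  simp [pMon, Multiset.map_add]; rfl

lemma pMon_sum {ι : Type*} (s : Finset ι) (g : ι → Multiset ℕ) :
    pMon (∑ i ∈ s, g i) = ∏ i ∈ s, pMon (g i) := by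
  classical
  induction s using Finset.cons_induction with
  | empty => simp [pMon_zero]
  | cons a s ha ih => rw [Finset.sum_cons, Finset.prod_cons, pMon_add, ih]

lemma msum_sum {ι : Type*} (s : Finset ι) (g : ι → Multiset ℕ) :
    (∑ i ∈ s, g i).sum = ∑ i ∈ s, (g i).sum := by
  classical
  induction s using Finset.cons_induction with
  | empty => simp
  | cons a s ha ih => rw [Finset.sum_cons, Finset.sum_cons, Multiset.sum_add, ih]

lemma hall_pMon (f : SymF) (μ : Multiset ℕ) (hμ : ∀ i ∈ μ, 0 < i) :
    hall f (pMon μ) = f.coeff (mVec μ) * zOf (mVec μ) := by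
  classical
  rw [pMon_eq_monomial μ hμ, hall]
  rw [Finset.sum_eq_single (mVec μ)]
  · simp [MvPolynomial.coeff_monomial]
  · intro b _ hb
    simp [MvPolynomial.coeff_monomial, Ne.symm hb]
  · intro h
    simp [MvPolynomial.notMem_support_iff.mp h]

lemma sum_get (lam : List ℕ) : ∑ i : Fin lam.length, lam.get i = lam.sum := by
  conv_rhs => rw [← List.ofFn_get lam]
  rw [List.sum_ofFn]

lemma prod_sum_pi {n : ℕ} (k : Fin n → ℕ) (F : ∀ i, Nat.Partition (k i) → SymF) :
    ∏ i, ∑ g : Nat.Partition (k i), F i g = ∑ γ : (∀ i, Nat.Partition (k i)), ∏ i, F i (γ i) := by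
  rw [Finset.prod_univ_sum (fun i => (Finset.univ : Finset (Nat.Partition (k i)))) F,
    Fintype.piFinset_univ]

set_option maxHeartbeats 1000000 in
lemma coeff_expand (lam : List ℕ) (M : Multiset ℕ) (r : ℕ) (hMpos : ∀ i ∈ M, 0 < i) :
    (hPoly r * hProdM ↑lam).coeff (mVec M) =
      ∑ γ0 : Nat.Partition r, ∑ γ : (i : Fin lam.length) → Nat.Partition (lam.get i),
        if γ0.parts + ∑ i, (γ i).parts = M then
          (zPart γ0.parts)⁻¹ * ∏ i, (zPart ((γ i).parts))⁻¹ else 0 := by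
  have hP : ∀ m : ℕ, hPoly m
      = ∑ g : Nat.Partition m, MvPolynomial.C (zPart g.parts)⁻¹ * pMon g.parts :=
    fun m => Finset.sum_congr rfl fun g _ => MvPolynomial.smul_eq_C_mul _ _
  have hprod : hProdM ↑lam = ∑ γ : (i : Fin lam.length) → Nat.Partition (lam.get i),
      MvPolynomial.C (∏ i, (zPart ((γ i).parts))⁻¹) * pMon (∑ i, (γ i).parts) := by
    unfold hProdM
    have h0 : (Multiset.map hPoly ↑lam).prod = ∏ i : Fin lam.length, hPoly (lam.get i) := by
      conv_lhs => rw [← List.ofFn_get lam]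
      rw [Multiset.map_coe, Multiset.prod_coe, List.map_ofFn, List.prod_ofFn]
      rfl
    rw [h0]
    have h1 : ∏ i : Fin lam.length, hPoly (lam.get i)
        = ∏ i : Fin lam.length, ∑ g : Nat.Partition (lam.get i),
            MvPolynomial.C (zPart g.parts)⁻¹ * pMon g.parts :=
      Finset.prod_congr rfl fun i _ => hP (lam.get i)
    rw [h1, prod_sum_pi (fun i => lam.get i)
      (fun i g => MvPolynomial.C (zPart g.parts)⁻¹ * pMon g.parts)]
    refine Finset.sum_congr rfl fun γ _ => ?_
    rw [Finset.prod_mul_distrib, pMon_sum, map_prod]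
  rw [hP r, hprod, Finset.sum_mul_sum]
  rw [MvPolynomial.coeff_sum]
  refine Finset.sum_congr rfl fun γ0 _ => ?_
  rw [MvPolynomial.coeff_sum]
  refine Finset.sum_congr rfl fun γ _ => ?_
  have hpos : ∀ i ∈ γ0.parts + ∑ i, (γ i).parts, 0 < i := by
    intro i hi
    rcases Multiset.mem_add.mp hi with h | h
    · exact γ0.parts_pos h
    · obtain ⟨j, _, hj⟩ := Multiset.mem_sum.mp h
      exact (γ j).parts_pos hj
  have : MvPolynomial.C (zPart γ0.parts)⁻¹ * pMon γ0.parts *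
        (MvPolynomial.C (∏ i, (zPart ((γ i).parts))⁻¹) * pMon (∑ i, (γ i).parts))
      = MvPolynomial.C ((zPart γ0.parts)⁻¹ * ∏ i, (zPart ((γ i).parts))⁻¹) *
        MvPolynomial.monomial (mVec (γ0.parts + ∑ i, (γ i).parts)) 1 := by
    rw [← pMon_eq_monomial _ hpos, pMon_add, map_mul]
    ring
  rw [this, MvPolynomial.coeff_C_mul, MvPolynomial.coeff_monomial]
  have hiff : (mVec (γ0.parts + ∑ i, (γ i).parts) = mVec M)
      ↔ (γ0.parts + ∑ i, (γ i).parts = M) :=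
    ⟨fun h => mVec_inj hpos hMpos h, fun h => by rw [h]⟩
  rw [if_congr hiff rfl rfl, mul_ite, mul_one, mul_zero]

lemma key_sum (lam μ : List ℕ) (hmpos : ∀ i ∈ μ, 0 < i)
    (hle : lam.sum ≤ μ.sum)
    (γ : (i : Fin lam.length) → Nat.Partition (lam.get i)) :
    ∑ γ0 : Nat.Partition (μ.sum - lam.sum),
      (if γ0.parts + ∑ i, (γ i).parts = (↑μ : Multiset ℕ) then
        (zPart γ0.parts)⁻¹ * (∏ i, (zPart ((γ i).parts))⁻¹) * zPart ↑μ else 0)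
    = ((∏ i ∈ Finset.Icc 1 μ.sum, multin (Multiset.count i ↑μ)
        (fun j => (γ j).parts.count i) : ℕ) : ℂ) := by
  have hMpos : ∀ i ∈ (↑μ : Multiset ℕ), 0 < i := fun i hi => hmpos i (by exact_mod_cast hi)
  set M : Multiset ℕ := ↑μ with hM
  have hMsum : M.sum = μ.sum := Multiset.sum_coe μ
  set S : Multiset ℕ := ∑ i, (γ i).parts with hS
  have hSsum : S.sum = lam.sum := by
    rw [hS, msum_sum]
    rw [show (∑ i : Fin lam.length, ((γ i).parts).sum) = ∑ i : Fin lam.length, lam.get i from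
      Finset.sum_congr rfl fun i _ => (γ i).parts_sum]
    exact sum_get lam
  have hSpos : ∀ x ∈ S, 0 < x := by
    intro x hx
    obtain ⟨j, _, hj⟩ := Multiset.mem_sum.mp (hS ▸ hx)
    exact (γ j).parts_pos hj
  set T := Finset.Icc 1 μ.sum with hT
  by_cases hSle : S ≤ M
  · have hadd : (M - S) + S = M := tsub_add_cancel_of_le hSle
    have hsub_sum : (M - S).sum = μ.sum - lam.sum := by
      have h := congrArg Multiset.sum hadd
      rw [Multiset.sum_add, hSsum, hMsum] at h
      omega
    have hsubpos : ∀ {x : ℕ}, x ∈ M - S → 0 < x :=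
      fun hx => hMpos _ (Multiset.mem_of_le (tsub_le_self) hx)
    let γstar : Nat.Partition (μ.sum - lam.sum) := ⟨M - S, hsubpos, hsub_sum⟩
    have hzero : ∀ b : Nat.Partition (μ.sum - lam.sum), b ≠ γstar →
        (if b.parts + S = M then
          (zPart b.parts)⁻¹ * (∏ i, (zPart ((γ i).parts))⁻¹) * zPart M else 0) = 0 := by
      intro b hb
      rw [if_neg]
      intro hcond
      exact hb (Nat.Partition.ext (add_right_cancel (hcond.trans hadd.symm)))
    rw [Fintype.sum_eq_single γstar hzero]
    have hparts : γstar.parts = M - S := rfl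
    rw [hparts, if_pos hadd]
    -- numeric part
    have hTM : M.toFinset ⊆ T := by
      intro x hx
      have hxm : x ∈ M := Multiset.mem_toFinset.mp hx
      refine Finset.mem_Icc.mpr ⟨hMpos x hxm, ?_⟩
      have := Multiset.single_le_sum (fun y _ => Nat.zero_le y) x hxm
      omega
    have hT0 : (M - S).toFinset ⊆ T := fun x hx =>
      hTM (Multiset.mem_toFinset.mpr
        (Multiset.mem_of_le (tsub_le_self) (Multiset.mem_toFinset.mp hx)))
    have hTγ : ∀ j, ((γ j).parts).toFinset ⊆ T := by
      intro j x hx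
      have h1 : (γ j).parts ≤ S := by
        rw [hS]
        exact Finset.single_le_sum (f := fun i => (γ i).parts)
          (fun i _ => Multiset.zero_le _) (Finset.mem_univ j)
      exact hTM (Multiset.mem_toFinset.mpr
        (Multiset.mem_of_le (h1.trans hSle) (Multiset.mem_toFinset.mp hx)))
    have main : ∀ x ∈ T,
        ((x : ℂ) ^ M.count x * Nat.factorial (M.count x)) *
          ((((x : ℂ) ^ ((M - S).count x) * Nat.factorial ((M - S).count x))⁻¹) *
            ∏ j, ((x : ℂ) ^ ((γ j).parts.count x) * Nat.factorial ((γ j).parts.count x))⁻¹)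
        = (multin (M.count x) (fun j => (γ j).parts.count x) : ℂ) := by
      intro x hx
      obtain ⟨hx1, _⟩ := Finset.mem_Icc.mp (hT ▸ hx)
      have hcount : S.count x = ∑ j, (γ j).parts.count x := by
        rw [hS]; exact Multiset.count_sum'
      have hcle : S.count x ≤ M.count x := Multiset.le_iff_count.mp hSle x
      have hc0 : (M - S).count x = M.count x - ∑ j, (γ j).parts.count x := by
        rw [Multiset.count_sub, hcount]
      rw [hc0]
      exact pointwise x hx1 (M.count x) (fun j => (γ j).parts.count x) (hcount ▸ hcle)
    calc (zPart (M - S))⁻¹ * (∏ i, (zPart ((γ i).parts))⁻¹) * zPart M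
        = ∏ x ∈ T, (((x : ℂ) ^ M.count x * Nat.factorial (M.count x)) *
            ((((x : ℂ) ^ ((M - S).count x) * Nat.factorial ((M - S).count x))⁻¹) *
              ∏ j, ((x : ℂ) ^ ((γ j).parts.count x)
                * Nat.factorial ((γ j).parts.count x))⁻¹)) := by
          rw [zPart_eq_prod M hTM, zPart_eq_prod (M - S) hT0, ← Finset.prod_inv_distrib]
          have e1 : (∏ i, (zPart ((γ i).parts))⁻¹)
              = ∏ x ∈ T, ∏ j, ((x : ℂ) ^ ((γ j).parts.count x)
                  * Nat.factorial ((γ j).parts.count x))⁻¹ := by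
            rw [← Finset.prod_comm]
            exact Finset.prod_congr rfl fun j _ => by
              rw [zPart_eq_prod _ (hTγ j), ← Finset.prod_inv_distrib]
          rw [e1, ← Finset.prod_mul_distrib, ← Finset.prod_mul_distrib]
          exact Finset.prod_congr rfl fun x _ => by ring
      _ = ∏ x ∈ T, (multin (M.count x) (fun j => (γ j).parts.count x) : ℂ) :=
          Finset.prod_congr rfl main
      _ = _ := by rw [← Nat.cast_prod]
  · have hzero : ∀ γ0 : Nat.Partition (μ.sum - lam.sum),
        (if γ0.parts + S = M then
          (zPart γ0.parts)⁻¹ * (∏ i, (zPart ((γ i).parts))⁻¹) * zPart M else 0) = 0 := by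
      intro γ0
      rw [if_neg]
      intro hcond
      exact hSle (le_of_le_of_eq (le_add_self) hcond)
    rw [Finset.sum_eq_zero (fun γ0 _ => hzero γ0)]
    obtain ⟨x, hx⟩ : ∃ x, M.count x < S.count x := by
      by_contra h
      push_neg at h
      exact hSle (Multiset.le_iff_count.mpr h)
    have hxS : x ∈ S := Multiset.count_pos.mp (by omega)
    have hx1 : 1 ≤ x := hSpos x hxS
    have hx2 : x ≤ μ.sum := by
      have := Multiset.single_le_sum (fun y _ => Nat.zero_le y) x hxS
      omega
    have hxT : x ∈ T := Finset.mem_Icc.mpr ⟨hx1, hx2⟩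
    have hc' : S.count x = ∑ j, (γ j).parts.count x := by
      rw [hS]; exact Multiset.count_sum'
    have hm0 : multin (M.count x) (fun j => (γ j).parts.count x) = 0 := by
      rw [multin, if_neg]
      omega
    rw [Finset.prod_eq_zero hxT hm0, Nat.cast_zero]

set_option linter.unusedVariables false in
/-- `H_{λ,μ} = ⟨h_{|μ|-|λ|} h_λ, p_μ⟩` equals the sum over all sequences of partitions
`γ^{(i)} ⊢ λ_i` of the products of multinomial coefficients
`∏_i binom(m_i(μ); m_i(γ^{(1)}),…,m_i(γ^{(ℓ(λ))}))` (which vanish unless the union of the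
`γ^{(j)}` is a sub-multiset of `μ`). -/
theorem hall_h_p_eq_multinomial_sum (lam μ : List ℕ)
    (hlpos : ∀ i ∈ lam, 0 < i) (hlsort : lam.Pairwise (· ≥ ·))
    (hmpos : ∀ i ∈ μ, 0 < i) (hmsort : μ.Pairwise (· ≥ ·))
    (hle : lam.sum ≤ μ.sum) :
    hall (hPoly (μ.sum - lam.sum) * hProdM ↑lam) (pMon ↑μ) =
      ∑ γ : (i : Fin lam.length) → Nat.Partition (lam.get i),
        ((∏ i ∈ Finset.Icc 1 μ.sum,
          multin (Multiset.count i ↑μ) (fun j => (γ j).parts.count i) : ℕ) : ℂ) := by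
  have hμpos : ∀ i ∈ (↑μ : Multiset ℕ), 0 < i := fun i hi => hmpos i (by exact_mod_cast hi)
  rw [hall_pMon _ _ hμpos, zOf_mVec _ hμpos, coeff_expand lam ↑μ _ hμpos]
  rw [Finset.sum_comm, Finset.sum_mul]
  refine Finset.sum_congr rfl fun γ _ => ?_
  rw [Finset.sum_mul]
  simp only [ite_mul, zero_mul]
  exact key_sum lam μ hmpos hle γ
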